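/- Let X = ℓ^p(ℕ) with 1 ≤ p < ∞ or X = c₀(ℕ), let T = T_{f,w} be a unilateral pseudo-shift on X, and fix j ≥ 1. Define φ : X → X by φ(x) = Σ_{k≥1} x_{f^{k-1}(j)} e_k and let B_v be the unilateral weighted backward shift with weights v_n = w_{f^{n-1}(j)}. Then φ is a bounded linear operator with dense range and φ ∘ T = B_v ∘ φ. -/

import Mathlib

open scoped ENNReal
open Filter

/-- Statement 8 (coordinates indexed by `ℕ` starting at `0`, so the paper's
coordinate `k ≥ 1` is our `k - 1`, the condition `f(1) > 1` becomes `0 < f 0`,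
and the weight sequence `v_n = w_{f^{n-1}(j)}` becomes `v n = w (f^[n] j)`).
The pseudo-shift `T` satisfies `(T x) k = w (f k) * x (f k)` and the weighted
backward shift `B_v` satisfies `(B_v x) k = v (k+1) * x (k+1)`.  The claim is
stated both for `ℓ^p(ℕ)` (with `1 ≤ p < ∞`) and for `c₀(ℕ)`. -/
theorem stmt_8 (p : ℝ≥0∞) [Fact (1 ≤ p)] (hp : p ≠ ∞)
    (f : ℕ → ℕ) (hf : StrictMono f) (hf0 : 0 < f 0)
    (w : ℕ → ℂ) (hw : ∃ C, ∀ n, ‖w n‖ ≤ C) (j : ℕ)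
    (v : ℕ → ℂ) (hv : ∀ n, v n = w (f^[n] j)) :
    (∀ T Bv : lp (fun _ : ℕ => ℂ) p →L[ℂ] lp (fun _ : ℕ => ℂ) p,
      (∀ x k, T x k = w (f k) * x (f k)) →
      (∀ x k, Bv x k = v (k + 1) * x (k + 1)) →
      ∃ φ : lp (fun _ : ℕ => ℂ) p →L[ℂ] lp (fun _ : ℕ => ℂ) p,
        (∀ x k, φ x k = x (f^[k] j)) ∧ DenseRange φ ∧
        ∀ x, φ (T x) = Bv (φ x)) ∧
    (∀ T Bv : ZeroAtInftyContinuousMap ℕ ℂ →L[ℂ] ZeroAtInftyContinuousMap ℕ ℂ,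
      (∀ x k, T x k = w (f k) * x (f k)) →
      (∀ x k, Bv x k = v (k + 1) * x (k + 1)) →
      ∃ φ : ZeroAtInftyContinuousMap ℕ ℂ →L[ℂ] ZeroAtInftyContinuousMap ℕ ℂ,
        (∀ x k, φ x k = x (f^[k] j)) ∧ DenseRange φ ∧
        ∀ x, φ (T x) = Bv (φ x)) := by
  classical
  set g : ℕ → ℕ := fun k => f^[k] j with hg_def
  have hlt : ∀ n, n < f n := by
    intro n
    induction n with
    | zero => exact hf0
    | succ n ih => exact lt_of_le_of_lt ih (hf (Nat.lt_succ_self n))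
  have hgsucc : ∀ k, g (k + 1) = f (g k) := fun k => Function.iterate_succ_apply' f k j
  have hvg : ∀ n, v n = w (g n) := fun n => by rw [hv n, hg_def]
  have hgmono : StrictMono g := by
    apply strictMono_nat_of_lt_succ
    intro k
    rw [hgsucc k]
    exact hlt _
  have hginj : Function.Injective g := hgmono.injective
  constructor
  · -- lp case
    intro T Bv hT hBv
    have hp0 : p ≠ 0 := (zero_lt_one.trans_le Fact.out).ne'
    have hpt : 0 < p.toReal := ENNReal.toReal_pos hp0 hp
    have hmem : ∀ x : lp (fun _ : ℕ => ℂ) p, Memℓp (fun k => x (g k)) p := by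
      intro x
      exact memℓp_gen (((lp.memℓp x).summable hpt).comp_injective hginj)
    let φl : lp (fun _ : ℕ => ℂ) p →ₗ[ℂ] lp (fun _ : ℕ => ℂ) p :=
      { toFun := fun x => ⟨fun k => x (g k), hmem x⟩
        map_add' := fun x y => by
          ext k
          simp [lp.coeFn_add]
          rfl
        map_smul' := fun c x => by
          ext k
          simp [lp.coeFn_smul] }
    have hbound : ∀ x, ‖φl x‖ ≤ 1 * ‖x‖ := by
      intro x
      rw [one_mul]
      refine lp.norm_le_of_tsum_le hpt (norm_nonneg x) ?_
      calc (∑' (k : ℕ), ‖(φl x) k‖ ^ p.toReal)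
          = ∑' (k : ℕ), ((fun i => ‖x i‖ ^ p.toReal) ∘ g) k := rfl
        _ ≤ ∑' (i : ℕ), ‖x i‖ ^ p.toReal :=
            tsum_comp_le_tsum_of_inj ((lp.memℓp x).summable hpt)
              (fun i => Real.rpow_nonneg (norm_nonneg _) _) hginj
        _ = ‖x‖ ^ p.toReal := (lp.norm_rpow_eq_tsum hpt x).symm
    refine ⟨φl.mkContinuous 1 hbound, fun x k => rfl, ?_, ?_⟩
    · intro y
      refine mem_closure_of_tendsto (lp.hasSum_single hp y) (Filter.Eventually.of_forall ?_)
      intro s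
      refine ⟨∑ i ∈ s, lp.single p (g i) (y i), ?_⟩
      apply lp.ext
      funext k
      show (∑ i ∈ s, lp.single p (g i) (y i) : lp (fun _ : ℕ => ℂ) p) (g k)
          = (∑ i ∈ s, lp.single p i (y i) : lp (fun _ : ℕ => ℂ) p) k
      rw [lp.coeFn_sum, lp.coeFn_sum, Finset.sum_apply, Finset.sum_apply]
      have h1 : ∀ i ∈ s, (lp.single (E := fun _ : ℕ => ℂ) p (g i) (y i) (g k) : ℂ) = if k = i then y i else 0 := by
        intro i _
        rw [lp.single_apply (E := fun _ : ℕ => ℂ) p (g i) (y i) (g k)]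
        by_cases h : k = i
        · subst h; simp
        · simp [Pi.single_apply, hginj.eq_iff, h]
      have h2 : ∀ i ∈ s, (lp.single (E := fun _ : ℕ => ℂ) p i (y i) k : ℂ) = if k = i then y i else 0 := by
        intro i _
        rw [lp.single_apply (E := fun _ : ℕ => ℂ) p i (y i) k]
        by_cases h : k = i
        · subst h; simp
        · simp [Pi.single_apply, h]
      rw [Finset.sum_congr rfl h1, Finset.sum_congr rfl h2]
    · intro x
      apply lp.ext
      funext k
      have h1 : (φl.mkContinuous 1 hbound) (T x) k = (T x) (g k) := rfl
      have h2 : ((φl.mkContinuous 1 hbound) x) (k + 1) = x (g (k + 1)) := rfl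
      rw [h1, hT, hBv, h2, hvg, hgsucc]
  · -- c₀ case
    intro T Bv hT hBv
    have hcc : (Filter.cocompact ℕ) = atTop := by
      rw [cocompact_eq_cofinite, Nat.cofinite_eq_atTop]
    have hzero : ∀ x : ZeroAtInftyContinuousMap ℕ ℂ,
        Tendsto (fun k => x (g k)) (Filter.cocompact ℕ) (nhds 0) := by
      intro x
      have hx := x.zero_at_infty'
      rw [hcc] at hx ⊢
      exact hx.comp hgmono.tendsto_atTop
    let φl : ZeroAtInftyContinuousMap ℕ ℂ →ₗ[ℂ] ZeroAtInftyContinuousMap ℕ ℂ :=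
      { toFun := fun x => ⟨⟨fun k => x (g k), continuous_of_discreteTopology⟩, hzero x⟩
        map_add' := fun x y => by ext k; simp
        map_smul' := fun c x => by ext k; simp }
    have hbound : ∀ x, ‖φl x‖ ≤ 1 * ‖x‖ := by
      intro x
      rw [one_mul, ← ZeroAtInftyContinuousMap.norm_toBCF_eq_norm]
      refine (BoundedContinuousFunction.norm_le (norm_nonneg x)).mpr fun k => ?_
      calc ‖x (g k)‖ ≤ ‖x.toBCF‖ := x.toBCF.norm_coe_le_norm (g k)
        _ = ‖x‖ := ZeroAtInftyContinuousMap.norm_toBCF_eq_norm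
    refine ⟨φl.mkContinuous 1 hbound, fun x k => rfl, ?_, ?_⟩
    · rw [Metric.denseRange_iff]
      intro y ε hε
      have hy := y.zero_at_infty'
      rw [hcc, NormedAddCommGroup.tendsto_nhds_zero] at hy
      obtain ⟨N, hN⟩ := Filter.eventually_atTop.mp (hy (ε / 2) (by positivity))
      have hzfun : ∀ m, (fun m => ∑ i ∈ Finset.range N, if m = g i then y i else 0) m ≠ 0 →
          m ∈ (Finset.range N).image g := by
        intro m hm
        by_contra hmem
        apply hm
        refine Finset.sum_eq_zero fun i hi => ?_
        rw [if_neg]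
        intro h
        exact hmem (Finset.mem_image.mpr ⟨i, hi, h.symm⟩)
      have hztend : Tendsto (fun m => ∑ i ∈ Finset.range N, if m = g i then y i else 0)
          (Filter.cocompact ℕ) (nhds 0) := by
        rw [cocompact_eq_cofinite]
        refine Filter.Tendsto.congr' ?_ tendsto_const_nhds
        have hfin : {m | (fun m => ∑ i ∈ Finset.range N, if m = g i then y i else 0) m ≠ 0}.Finite :=
          ((Finset.range N).image g).finite_toSet.subset hzfun
        filter_upwards [hfin.eventually_cofinite_notMem] with m hm
        by_contra h
        exact hm (fun h' => h h'.symm)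
      set z : ZeroAtInftyContinuousMap ℕ ℂ :=
        ⟨⟨fun m => ∑ i ∈ Finset.range N, if m = g i then y i else 0,
          continuous_of_discreteTopology⟩, hztend⟩ with hz_def
      refine ⟨z, ?_⟩
      have hφz : ∀ k, (φl.mkContinuous 1 hbound) z k = if k < N then y k else 0 := by
        intro k
        have : (φl.mkContinuous 1 hbound) z k = ∑ i ∈ Finset.range N, if g k = g i then y i else 0 :=
          rfl
        rw [this]
        have heq : ∀ i ∈ Finset.range N, (if g k = g i then y i else 0) =
            if i = k then y i else 0 := by
          intro i _
          by_cases h : i = k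
          · subst h; simp
          · rw [if_neg (fun hgk => h (hginj hgk).symm), if_neg h]
        rw [Finset.sum_congr rfl heq, Finset.sum_ite_eq' (Finset.range N) k y]
        by_cases h : k < N <;> simp [h, Finset.mem_range]
      rw [dist_eq_norm, ← ZeroAtInftyContinuousMap.norm_toBCF_eq_norm]
      have hle : ‖(y - (φl.mkContinuous 1 hbound) z).toBCF‖ ≤ ε / 2 := by
        refine (BoundedContinuousFunction.norm_le (by positivity)).mpr fun k => ?_
        have hcoe : (y - (φl.mkContinuous 1 hbound) z).toBCF k
            = y k - (φl.mkContinuous 1 hbound) z k := rfl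
        rw [hcoe, hφz k]
        by_cases h : k < N
        · simp [h, le_of_lt (half_pos hε)]
        · rw [if_neg h, sub_zero]
          exact le_of_lt (hN k (le_of_not_gt h))
      exact lt_of_le_of_lt hle (half_lt_self hε)
    · intro x
      ext k
      have h1 : (φl.mkContinuous 1 hbound) (T x) k = (T x) (g k) := rfl
      have h2 : ((φl.mkContinuous 1 hbound) x) (k + 1) = x (g (k + 1)) := rfl
      rw [h1, hT, hBv, h2, hvg, hgsucc]
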